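/- Let π be a finitely generated group and let R = ℤ[π] denote its integral group ring (the monoid algebra of π over ℤ). Let A be a finitely generated left R-module and let φ : A → ℤ/2ℤ be a homomorphism of π-modules, i.e. an additive group homomorphism satisfying φ(g • a) = φ(a) for every g ∈ π and a ∈ A (the π-action on ℤ/2ℤ being necessarily trivial). Then the kernel ker φ = {a ∈ A : φ(a) = 0} is a finitely generated R-submodule of A. -/

import Mathlib

/-- Let `π` be a finitely generated group and `R = ℤ[π]` its integral
group ring.  Let `A` be a finitely generated left `R`-module and `φ : A → ℤ/2` an
additive homomorphism satisfying `φ (g • a) = φ a` for all `g ∈ π` (a homomorphism of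
`π`-modules, the action on `ℤ/2` being trivial).  Then the kernel `{a | φ a = 0}` is a
finitely generated `R`-submodule of `A`. -/
theorem kernel_fg_of_pi_module_hom_to_Z2
    (π : Type*) [Group π] [Group.FG π]
    (A : Type*) [AddCommGroup A] [Module (MonoidAlgebra ℤ π) A]
    [Module.Finite (MonoidAlgebra ℤ π) A]
    (φ : A →+ ZMod 2)
    (hφ : ∀ (g : π) (a : A), φ ((MonoidAlgebra.of ℤ π g) • a) = φ a) :
    ∃ s : Finset A,
      (Submodule.span (MonoidAlgebra ℤ π) (s : Set A) : Set A) = {a : A | φ a = 0} := by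
  classical
  set R := MonoidAlgebra ℤ π with hR
  -- the augmentation map
  let ε : R →ₐ[ℤ] ℤ := MonoidAlgebra.lift ℤ ℤ π 1
  have hεof : ∀ g : π, ε (MonoidAlgebra.of ℤ π g) = 1 := by
    intro g
    exact (MonoidAlgebra.lift_of (R := ℤ) (A := ℤ) (1 : π →* ℤ) g).trans rfl
  -- φ is ε-semilinear
  have hφsmul : ∀ (r : R) (a : A), φ (r • a) = ε r • φ a := by
    intro r a
    induction r using MonoidAlgebra.induction_on with
    | of g => rw [hφ, hεof, one_smul]
    | add f g hf hg => rw [add_smul, map_add, map_add, hf, hg, add_smul]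
    | smul n f hf =>
        rw [smul_assoc, map_zsmul, hf, map_zsmul, smul_assoc]
  -- the kernel as a submodule
  let K : Submodule R A :=
    { carrier := {a : A | φ a = 0}
      add_mem' := by
        intro a b ha hb
        simp only [Set.mem_setOf_eq] at *
        rw [map_add, ha, hb, add_zero]
      zero_mem' := by simp
      smul_mem' := by
        intro r a ha
        simp only [Set.mem_setOf_eq] at *
        rw [hφsmul, ha, smul_zero] }
  -- generators of the group and of the module
  obtain ⟨S, hS⟩ := Group.FG.out (G := π)
  obtain ⟨t, ht⟩ := Module.Finite.fg_top (R := R) (M := A)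
  -- the augmentation ideal is generated by the (of g - 1), g in S
  let J : Ideal R := Ideal.span ((fun g => (MonoidAlgebra.of ℤ π g : R) - 1) '' S)
  have hJg : ∀ g : π, (MonoidAlgebra.of ℤ π g : R) - 1 ∈ J := by
    intro g
    have hg : g ∈ Subgroup.closure (S : Set π) := hS ▸ Subgroup.mem_top g
    induction hg using Subgroup.closure_induction with
    | mem x hx => exact Ideal.subset_span ⟨x, hx, rfl⟩
    | one => rw [map_one, sub_self]; exact zero_mem J
    | mul x y hx hy ihx ihy =>
        have : (MonoidAlgebra.of ℤ π (x * y) : R) - 1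
            = MonoidAlgebra.of ℤ π x * (MonoidAlgebra.of ℤ π y - 1)
              + (MonoidAlgebra.of ℤ π x - 1) := by
          rw [map_mul, mul_sub, mul_one, sub_add_sub_cancel]
        rw [this]
        exact add_mem (Ideal.mul_mem_left _ _ ihy) ihx
    | inv x hx ihx =>
        have : (MonoidAlgebra.of ℤ π x⁻¹ : R) - 1
            = -(MonoidAlgebra.of ℤ π x⁻¹ * (MonoidAlgebra.of ℤ π x - 1)) := by
          have : (MonoidAlgebra.of ℤ π x⁻¹ : R) * MonoidAlgebra.of ℤ π x = 1 := by
            rw [← map_mul, inv_mul_cancel, map_one]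
          rw [mul_sub, this, mul_one, neg_sub]
        rw [this]
        exact neg_mem (Ideal.mul_mem_left _ _ ihx)
  have hker : ∀ r : R, r - algebraMap ℤ R (ε r) ∈ J := by
    intro r
    induction r using MonoidAlgebra.induction_on with
    | of g =>
        show MonoidAlgebra.of ℤ π g - algebraMap ℤ R (ε (MonoidAlgebra.of ℤ π g)) ∈ J
        rw [hεof, map_one]
        exact hJg g
    | add f g hf hg =>
        have : f + g - algebraMap ℤ R (ε (f + g))
            = (f - algebraMap ℤ R (ε f)) + (g - algebraMap ℤ R (ε g)) := by
          rw [map_add, map_add, add_sub_add_comm]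
        rw [this]; exact add_mem hf hg
    | smul n f hf =>
        have : n • f - algebraMap ℤ R (ε (n • f)) = n • (f - algebraMap ℤ R (ε f)) := by
          rw [map_zsmul, map_zsmul, smul_sub]
        rw [this]; exact zsmul_mem hf n
  -- the submodule N = J • A, realized as a finitely generated span
  let N : Submodule R A :=
    Submodule.span R ((S ×ˢ t).image
      (fun p : π × A => ((MonoidAlgebra.of ℤ π p.1 : R) - 1) • p.2) : Set A)
  -- every product (element of augmentation ideal) • (element of A) lies in N
  have hN : ∀ a : A, ∀ x : R, ε x = 0 → x • a ∈ N := by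
    have key : ∀ a ∈ Submodule.span R (t : Set A), ∀ x : R, ε x = 0 → x • a ∈ N := by
      intro a ha
      induction ha using Submodule.span_induction with
      | mem a hat =>
          intro x hx
          have hxJ : x ∈ J := by
            have := hker x
            rwa [hx, map_zero, sub_zero] at this
          clear hx
          induction hxJ using Submodule.span_induction with
          | mem y hy =>
              obtain ⟨g, hgS, rfl⟩ := hy
              exact Submodule.subset_span
                (Finset.mem_image.2 ⟨(g, a), Finset.mem_product.2 ⟨hgS, hat⟩, rfl⟩)
          | zero => rw [zero_smul]; exact zero_mem N
          | add y z hy hz ihy ihz => rw [add_smul]; exact add_mem ihy ihz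
          | smul r y hy ihy => rw [smul_assoc]; exact Submodule.smul_mem N r ihy
      | zero => intro x hx; rw [smul_zero]; exact zero_mem N
      | add a b ha hb iha ihb =>
          intro x hx
          rw [smul_add]; exact add_mem (iha x hx) (ihb x hx)
      | smul r b hb ihb =>
          intro x hx
          rw [smul_smul]
          exact ihb (x * r) (by rw [map_mul, hx, zero_mul])
    intro a x hx
    exact key a (ht ▸ Submodule.mem_top) x hx
  -- N is contained in K
  have hNK : N ≤ K := by
    refine Submodule.span_le.2 ?_
    intro y hy
    obtain ⟨⟨g, a⟩, _, rfl⟩ := Finset.mem_image.1 hy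
    show φ (((MonoidAlgebra.of ℤ π g : R) - 1) • a) = 0
    rw [sub_smul, one_smul, map_sub, hφ, sub_self]
  -- reduction modulo N
  have hmkQ : ∀ (r : R) (a : A), N.mkQ (r • a) = ε r • N.mkQ a := by
    intro r a
    have h1 : r • a - ε r • a = (r - algebraMap ℤ R (ε r)) • a := by
      rw [sub_smul, algebraMap_smul]
    have h2 : r • a - ε r • a ∈ N := by
      rw [h1]
      exact hN a _ (by simp [map_sub])
    have h3 : N.mkQ (r • a - ε r • a) = 0 := (Submodule.Quotient.mk_eq_zero N).2 h2
    rw [map_sub, sub_eq_zero] at h3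
    rw [h3, map_zsmul]
  -- A / N is a finitely generated ℤ-module
  have hfin : Module.Finite ℤ (A ⧸ N) := by
    refine ⟨⟨t.image N.mkQ, ?_⟩⟩
    rw [Finset.coe_image, eq_top_iff]
    rintro x -
    obtain ⟨a, rfl⟩ := N.mkQ_surjective x
    have ha : a ∈ Submodule.span R (t : Set A) := ht ▸ Submodule.mem_top
    induction ha using Submodule.span_induction with
    | mem a hat => exact Submodule.subset_span ⟨a, hat, rfl⟩
    | zero => rw [map_zero]; exact zero_mem _
    | add a b ha hb iha ihb => rw [map_add]; exact add_mem iha ihb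
    | smul r b hb ihb =>
        rw [hmkQ]
        exact Submodule.smul_mem _ _ ihb
  -- hence the image of K in A / N is finitely generated over ℤ, hence over R
  have hmapfg : (K.map N.mkQ).FG := by
    have : IsNoetherian ℤ (A ⧸ N) := isNoetherian_of_isNoetherianRing_of_finite ℤ _
    obtain ⟨u, hu⟩ := IsNoetherian.noetherian ((K.map N.mkQ).restrictScalars ℤ)
    refine ⟨u, le_antisymm (Submodule.span_le.2 ?_) ?_⟩
    · intro x hx
      have : x ∈ Submodule.span ℤ (u : Set (A ⧸ N)) := hu ▸ Submodule.subset_span hx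
      rw [hu] at this
      exact this
    · intro x hx
      have : x ∈ Submodule.span ℤ (u : Set (A ⧸ N)) := by rw [hu]; exact hx
      exact Submodule.span_subset_span ℤ R _ this
  -- conclude that K is finitely generated
  have hKfg : K.FG := by
    apply Submodule.fg_of_fg_map_of_fg_inf_ker N.mkQ hmapfg
    rw [Submodule.ker_mkQ, inf_eq_right.2 hNK]
    exact ⟨(S ×ˢ t).image (fun p : π × A => ((MonoidAlgebra.of ℤ π p.1 : R) - 1) • p.2), rfl⟩
  obtain ⟨s, hs⟩ := hKfg
  exact ⟨s, by rw [hs]; rfl⟩
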